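/- Let N be a positive integer, I ⊆ [N], T > 0 and c > 0 reals, and γ ∈ (0, T²]. For each x ∈ I let q_·(x) : [N] → ℝ be a nonnegative function with ∑_{z∈[N]} q_z(x) ≤ T. Let R be a random subset of [N] including each element independently with probability γ/T², and define J = { x ∈ I : x ∈ R and ∑_{z ∈ R, z ≠ x} q_z(x) > c/T }. Then Pr[ |J| ≤ 10·|I|·γ²/(c·T²) ] ≥ 0.9. -/

import Mathlib

open MeasureTheory
open scoped ENNReal

private lemma mset_aux {N : ℕ} (s : Set (Fin N → Bool)) : MeasurableSet s :=
  s.to_countable.measurableSet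

private lemma lintegral_ite_aux {α : Type*} [MeasurableSpace α] (μ : Measure α)
    (P : α → Prop) [DecidablePred P] (h : MeasurableSet {r | P r}) (a : ℝ≥0∞) :
    ∫⁻ r, (if P r then a else 0) ∂μ = a * μ {r | P r} := by
  have : (fun r => if P r then a else 0) = Set.indicator {r | P r} (fun _ => a) := by
    ext r
    by_cases hr : P r <;> simp [Set.indicator_apply, hr]
  rw [this, lintegral_indicator_const h]

private lemma pi_box_two_aux {N : ℕ} (ν : Measure Bool) [IsProbabilityMeasure ν]
    (x z : Fin N) (hxz : x ≠ z) :
    (Measure.pi fun _ : Fin N => ν) {R : Fin N → Bool | R x = true ∧ R z = true}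
      = ν {true} * ν {true} := by
  classical
  have hset : {R : Fin N → Bool | R x = true ∧ R z = true}
      = Set.univ.pi (fun y => if y = x ∨ y = z then ({true} : Set Bool) else Set.univ) := by
    ext R
    simp only [Set.mem_setOf_eq, Set.mem_pi, Set.mem_univ, forall_true_left]
    constructor
    · rintro ⟨h1, h2⟩ y
      by_cases hy : y = x ∨ y = z
      · rcases hy with rfl | rfl <;> simp [h1, h2]
      · simp [hy]
    · intro h
      refine ⟨?_, ?_⟩
      · have := h x; simpa using this
      · have := h z; simpa using this
  rw [hset, Measure.pi_pi]
  have hmeas : ∀ y : Fin N,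
      ν (if y = x ∨ y = z then ({true} : Set Bool) else Set.univ)
        = if y = x ∨ y = z then ν {true} else 1 := by
    intro y; split_ifs
    · rfl
    · exact measure_univ
  rw [Finset.prod_congr rfl (fun y _ => hmeas y)]
  have hfilter : Finset.univ.filter (fun y : Fin N => y = x ∨ y = z) = {x, z} := by
    ext y; simp [Finset.mem_insert]
  rw [← Finset.prod_filter, hfilter, Finset.prod_pair hxz]

private lemma bad_set_markov_aux (N : ℕ) (I : Finset (Fin N)) (T c γ : ℝ)
    (hT : 0 < T) (hc : 0 < c) (hγ0 : 0 < γ)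
    (q : Fin N → Fin N → ℝ) (hq : ∀ x ∈ I, ∀ z, 0 ≤ q x z)
    (hsum : ∀ x ∈ I, ∑ z, q x z ≤ T)
    (ν : Measure Bool) [IsProbabilityMeasure ν]
    (hν : ν {true} = ENNReal.ofReal (γ / T ^ 2)) :
    (9 : ℝ≥0∞) / 10 ≤
      (Measure.pi fun _ : Fin N => ν)
        {R : Fin N → Bool |
          (((I.filter fun x => R x = true ∧
              c / T < ∑ z ∈ Finset.univ.filter (fun z => R z = true ∧ z ≠ x), q x z).card : ℝ))
            ≤ 10 * (I.card : ℝ) * γ ^ 2 / (c * T ^ 2)} := by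
  classical
  set μ := Measure.pi fun _ : Fin N => ν with hμ
  set B : ℝ := γ ^ 2 / (c * T ^ 2) with hB
  have hB0 : 0 < B := by positivity
  -- Step 1: for each x ∈ I, the probability that x is bad is at most ofReal B
  have key : ∀ x ∈ I,
      μ {R : Fin N → Bool | R x = true ∧
          c / T < ∑ z ∈ Finset.univ.filter (fun z => R z = true ∧ z ≠ x), q x z}
        ≤ ENNReal.ofReal B := by
    intro x hx
    set f : (Fin N → Bool) → ℝ≥0∞ := fun R =>
      ∑ z ∈ Finset.univ.filter (fun z : Fin N => z ≠ x),
        (if R x = true ∧ R z = true then ENNReal.ofReal (q x z) else 0) with hf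
    have hsub : {R : Fin N → Bool | R x = true ∧
          c / T < ∑ z ∈ Finset.univ.filter (fun z => R z = true ∧ z ≠ x), q x z}
        ⊆ {R | ENNReal.ofReal (c / T) ≤ f R} := by
      rintro R ⟨hRx, hRs⟩
      have hfeq : f R = ENNReal.ofReal
          (∑ z ∈ Finset.univ.filter (fun z => R z = true ∧ z ≠ x), q x z) := by
        rw [ENNReal.ofReal_sum_of_nonneg (fun z _ => hq x hx z)]
        simp only [hf]
        rw [Finset.sum_filter, Finset.sum_filter]
        refine Finset.sum_congr rfl (fun z _ => ?_)
        by_cases h1 : z ≠ x <;> by_cases h2 : R z = true <;> simp [h1, h2, hRx]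
      have hcT : (0:ℝ) < ∑ z ∈ Finset.univ.filter (fun z => R z = true ∧ z ≠ x), q x z :=
        lt_trans (by positivity) hRs
      simp only [Set.mem_setOf_eq, hfeq]
      exact le_of_lt ((ENNReal.ofReal_lt_ofReal_iff hcT).mpr hRs)
    have hint : ∫⁻ R, f R ∂μ ≤ ENNReal.ofReal (T * (γ / T ^ 2) ^ 2) := by
      rw [hf, lintegral_finset_sum _ (fun z _ => measurable_of_countable _)]
      have hterm : ∀ z ∈ Finset.univ.filter (fun z : Fin N => z ≠ x),
          ∫⁻ R, (if R x = true ∧ R z = true then ENNReal.ofReal (q x z) else 0) ∂μ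
            = ENNReal.ofReal (q x z) *
                (ENNReal.ofReal (γ / T ^ 2) * ENNReal.ofReal (γ / T ^ 2)) := by
        intro z hz
        have hzx : x ≠ z := fun h => (Finset.mem_filter.mp hz).2 h.symm
        rw [lintegral_ite_aux μ _ (mset_aux _) _, hμ, pi_box_two_aux ν x z hzx, hν]
      rw [Finset.sum_congr rfl hterm, ← Finset.sum_mul]
      have h1 : ∑ z ∈ Finset.univ.filter (fun z : Fin N => z ≠ x), ENNReal.ofReal (q x z)
          = ENNReal.ofReal (∑ z ∈ Finset.univ.filter (fun z : Fin N => z ≠ x), q x z) :=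
        (ENNReal.ofReal_sum_of_nonneg (fun z _ => hq x hx z)).symm
      have h2 : ENNReal.ofReal (γ / T ^ 2) * ENNReal.ofReal (γ / T ^ 2)
          = ENNReal.ofReal ((γ / T ^ 2) ^ 2) := by
        rw [pow_two (γ / T ^ 2), ENNReal.ofReal_mul (by positivity)]
      rw [h1, h2, ← ENNReal.ofReal_mul (Finset.sum_nonneg (fun z _ => hq x hx z))]
      apply ENNReal.ofReal_le_ofReal
      have hs : ∑ z ∈ Finset.univ.filter (fun z : Fin N => z ≠ x), q x z ≤ T := by
        refine le_trans ?_ (hsum x hx)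
        exact Finset.sum_le_sum_of_subset_of_nonneg (Finset.filter_subset _ _)
          (fun z _ _ => hq x hx z)
      have hp2 : (0:ℝ) ≤ (γ / T ^ 2) ^ 2 := by positivity
      nlinarith [mul_le_mul_of_nonneg_right hs hp2]
    have hε0 : ENNReal.ofReal (c / T) ≠ 0 :=
      (ENNReal.ofReal_pos.mpr (by positivity)).ne'
    calc μ _ ≤ μ {R | ENNReal.ofReal (c / T) ≤ f R} := measure_mono hsub
      _ ≤ (∫⁻ R, f R ∂μ) / ENNReal.ofReal (c / T) :=
          meas_ge_le_lintegral_div (measurable_of_countable _).aemeasurable hε0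
            ENNReal.ofReal_ne_top
      _ ≤ ENNReal.ofReal (T * (γ / T ^ 2) ^ 2) / ENNReal.ofReal (c / T) :=
          ENNReal.div_le_div_right hint _
      _ = ENNReal.ofReal (T * (γ / T ^ 2) ^ 2 / (c / T)) :=
          (ENNReal.ofReal_div_of_pos (by positivity)).symm
      _ = ENNReal.ofReal B := by
          congr 1
          rw [hB]
          field_simp
  -- Step 2: expectation of |J|
  set g : (Fin N → Bool) → ℝ≥0∞ := fun R =>
    ((I.filter fun x => R x = true ∧
        c / T < ∑ z ∈ Finset.univ.filter (fun z => R z = true ∧ z ≠ x), q x z).card : ℝ≥0∞)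
    with hg
  have hgsum : ∀ R, g R = ∑ x ∈ I,
      (if R x = true ∧
          c / T < ∑ z ∈ Finset.univ.filter (fun z => R z = true ∧ z ≠ x), q x z
        then (1:ℝ≥0∞) else 0) := by
    intro R
    simp only [hg]
    rw [Finset.card_filter]
    push_cast
    rfl
  have hEg : ∫⁻ R, g R ∂μ ≤ (I.card : ℝ≥0∞) * ENNReal.ofReal B := by
    calc ∫⁻ R, g R ∂μ
        = ∑ x ∈ I, μ {R : Fin N → Bool | R x = true ∧
            c / T < ∑ z ∈ Finset.univ.filter (fun z => R z = true ∧ z ≠ x), q x z} := by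
          simp_rw [hgsum]
          rw [lintegral_finset_sum _ (fun x _ => measurable_of_countable _)]
          exact Finset.sum_congr rfl
            (fun x _ => by rw [lintegral_ite_aux μ _ (mset_aux _) 1, one_mul])
      _ ≤ ∑ _x ∈ I, ENNReal.ofReal B := Finset.sum_le_sum key
      _ = (I.card : ℝ≥0∞) * ENNReal.ofReal B := by
          rw [Finset.sum_const, nsmul_eq_mul]
  -- Step 3: Markov and conclusion
  rcases Nat.eq_zero_or_pos I.card with h0 | hpos
  · have hI : I = ∅ := Finset.card_eq_zero.mp h0
    have huniv : {R : Fin N → Bool |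
        (((I.filter fun x => R x = true ∧
            c / T < ∑ z ∈ Finset.univ.filter (fun z => R z = true ∧ z ≠ x), q x z).card : ℝ))
          ≤ 10 * (I.card : ℝ) * γ ^ 2 / (c * T ^ 2)} = Set.univ := by
      ext R
      simp [hI]
    rw [huniv, measure_univ]
    exact ENNReal.div_le_of_le_mul (by norm_num)
  · set S := {R : Fin N → Bool |
        (((I.filter fun x => R x = true ∧
            c / T < ∑ z ∈ Finset.univ.filter (fun z => R z = true ∧ z ≠ x), q x z).card : ℝ))
          ≤ 10 * (I.card : ℝ) * γ ^ 2 / (c * T ^ 2)} with hS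
    set ε : ℝ≥0∞ := ENNReal.ofReal (10 * (I.card : ℝ) * γ ^ 2 / (c * T ^ 2)) with hε
    have hbound0 : (0:ℝ) < 10 * (I.card : ℝ) * γ ^ 2 / (c * T ^ 2) := by
      have : (0:ℝ) < (I.card : ℝ) := by exact_mod_cast hpos
      positivity
    have hcompl : μ Sᶜ ≤ 1 / 10 := by
      have hsub : Sᶜ ⊆ {R | ε ≤ g R} := by
        intro R hR
        simp only [hS, Set.mem_compl_iff, Set.mem_setOf_eq, not_le] at hR
        have h := ENNReal.ofReal_le_ofReal hR.le
        rw [ENNReal.ofReal_natCast] at h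
        exact h
      have hε0 : ε ≠ 0 := (ENNReal.ofReal_pos.mpr hbound0).ne'
      have hDeq : ε = 10 * ((I.card : ℝ≥0∞) * ENNReal.ofReal B) := by
        rw [hε, hB]
        rw [show 10 * (I.card : ℝ) * γ ^ 2 / (c * T ^ 2)
            = 10 * ((I.card : ℝ) * (γ ^ 2 / (c * T ^ 2))) by ring]
        rw [ENNReal.ofReal_mul (by norm_num), ENNReal.ofReal_mul (by positivity)]
        norm_num [ENNReal.ofReal_natCast]
      have hD0 : (I.card : ℝ≥0∞) * ENNReal.ofReal B ≠ 0 :=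
        mul_ne_zero (Nat.cast_ne_zero.mpr hpos.ne') (ENNReal.ofReal_pos.mpr hB0).ne'
      have hDtop : (I.card : ℝ≥0∞) * ENNReal.ofReal B ≠ ⊤ :=
        ENNReal.mul_ne_top (ENNReal.natCast_ne_top _) ENNReal.ofReal_ne_top
      calc μ Sᶜ ≤ μ {R | ε ≤ g R} := measure_mono hsub
        _ ≤ (∫⁻ R, g R ∂μ) / ε :=
            meas_ge_le_lintegral_div (measurable_of_countable _).aemeasurable hε0
              ENNReal.ofReal_ne_top
        _ ≤ ((I.card : ℝ≥0∞) * ENNReal.ofReal B) / ε := ENNReal.div_le_div_right hEg _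
        _ = (1 * ((I.card : ℝ≥0∞) * ENNReal.ofReal B)) /
              (10 * ((I.card : ℝ≥0∞) * ENNReal.ofReal B)) := by rw [one_mul, hDeq]
        _ = 1 / 10 := ENNReal.mul_div_mul_right 1 10 hD0 hDtop
    have hSmeas : μ S = 1 - μ Sᶜ := by
      have := measure_compl (μ := μ) (s := Sᶜ) (mset_aux _) (measure_ne_top μ _)
      rwa [compl_compl, measure_univ] at this
    have h910 : (1:ℝ≥0∞) - 1 / 10 = 9 / 10 := by
      refine ENNReal.sub_eq_of_eq_add (by norm_num) ?_
      rw [ENNReal.div_add_div_same]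
      norm_num
      exact (ENNReal.div_self (by norm_num) (by norm_num)).symm
    calc (9:ℝ≥0∞) / 10 = 1 - 1 / 10 := h910.symm
      _ ≤ 1 - μ Sᶜ := tsub_le_tsub_left hcompl 1
      _ = μ S := hSmeas.symm

/-- Markov bound for the bad set `J`: with `R ⊆ [N]` a random subset including each
element independently with probability `γ/T²`, and
`J = {x ∈ I : x ∈ R and ∑_{z ∈ R, z ≠ x} q_z(x) > c/T}`, we have
`Pr[ |J| ≤ 10·|I|·γ²/(c·T²) ] ≥ 0.9`. -/
theorem bad_set_markov (N : ℕ) (hN : 0 < N) (I : Finset (Fin N)) (T c γ : ℝ)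
    (hT : 0 < T) (hc : 0 < c) (hγ0 : 0 < γ) (hγ : γ ≤ T ^ 2)
    (q : Fin N → Fin N → ℝ) (hq : ∀ x ∈ I, ∀ z, 0 ≤ q x z)
    (hsum : ∀ x ∈ I, ∑ z, q x z ≤ T) :
    (9 : ℝ≥0∞) / 10 ≤
      (Measure.pi fun _ : Fin N =>
          (PMF.bernoulli (Real.toNNReal (γ / T ^ 2))
            (Real.toNNReal_le_one.mpr ((div_le_one (by positivity)).mpr hγ))).toMeasure)
        {R : Fin N → Bool |
          (((I.filter fun x => R x = true ∧
              c / T < ∑ z ∈ Finset.univ.filter (fun z => R z = true ∧ z ≠ x), q x z).card : ℝ))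
            ≤ 10 * (I.card : ℝ) * γ ^ 2 / (c * T ^ 2)} := by
  apply bad_set_markov_aux N I T c γ hT hc hγ0 q hq hsum
  rw [PMF.toMeasure_apply_singleton _ _ (measurableSet_singleton _), PMF.bernoulli_apply]
  rfl
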